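/- Let N ≥ 1 and let H₁, …, H_{N−1} : ℝ^N → ℝ be twice continuously differentiable. Then the Nambu vector field X : ℝ^N → ℝ^N defined by Xⁱ(x) = {xⁱ, H₁, …, H_{N−1}}(x) is divergence-free: Σᵢ (∂Xⁱ/∂xⁱ)(x) = 0 for all x ∈ ℝ^N (generalized Liouville theorem: the Nambu flow preserves volume). -/

import Mathlib

/-- Partial-derivative gradient of `f : ℝ^N → ℝ` at `x`. -/
noncomputable def grad {N : ℕ} (f : (Fin N → ℝ) → ℝ) (x : Fin N → ℝ) : Fin N → ℝ :=
  fun i => fderiv ℝ f x (Pi.single i 1)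

/-- The `i`-th component of the Nambu vector field `{xⁱ, H₁, …, H_{N-1}}`:
the determinant of the Jacobian matrix of `(xⁱ, H₁, …, H_{N-1})`, i.e. the
Levi-Civita contraction
`Σ ε^{i j₁ … j_{N-1}} (∂H₁/∂x^{j₁}) ⋯ (∂H_{N-1}/∂x^{j_{N-1}})`. -/
noncomputable def nambuVF (N : ℕ) (H : Fin (N - 1) → (Fin N → ℝ) → ℝ)
    (i : Fin N) (x : Fin N → ℝ) : ℝ :=
  Matrix.det (Matrix.of fun p q : Fin N =>
    if _h : (p : ℕ) = 0 then (Pi.single i 1 : Fin N → ℝ) q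
    else grad (H ⟨(p : ℕ) - 1, by have := p.isLt; omega⟩) x q)

open Equiv Finset
/-- generalized Liouville theorem: for twice continuously
differentiable Hamiltonians `H₁, …, H_{N-1}`, the Nambu vector field
`Xⁱ(x) = {xⁱ, H₁, …, H_{N-1}}(x)` is divergence-free:
`Σᵢ ∂Xⁱ/∂xⁱ = 0` everywhere. -/
theorem nambu_vector_field_divergence_free
    (N : ℕ) (hN : 1 ≤ N) (H : Fin (N - 1) → (Fin N → ℝ) → ℝ)
    (hH : ∀ m, ContDiff ℝ 2 (H m)) (x : Fin N → ℝ) :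
    ∑ i : Fin N, fderiv ℝ (fun y => nambuVF N H i y) x (Pi.single i 1) = 0 := by
  obtain ⟨M, rfl⟩ : ∃ M, N = M + 1 := ⟨N - 1, by omega⟩
  -- notation
  set e : Fin (M+1) → Fin (M+1) → ℝ := fun i => Pi.single i 1 with he
  -- second derivatives
  set B : Fin M → (Fin (M+1) → ℝ) →L[ℝ] (Fin (M+1) → ℝ) →L[ℝ] ℝ :=
    fun p => fderiv ℝ (fderiv ℝ (H p)) x with hB
  -- first-order derivative of the partial derivatives
  set D' : Fin M → Fin (M+1) → (Fin (M+1) → ℝ) →L[ℝ] ℝ :=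
    fun p q => (ContinuousLinearMap.apply ℝ ℝ (e q)).comp (B p) with hD'
  have hD : ∀ (p : Fin M) (q : Fin (M+1)),
      HasFDerivAt (fun y => fderiv ℝ (H p) y (e q)) (D' p q) x := by
    intro p q
    have h1 : HasFDerivAt (fderiv ℝ (H p)) (B p) x := by
      have h2 : Differentiable ℝ (fderiv ℝ (H p)) :=
        ((hH p).fderiv_right (m := 1) (by norm_num)).differentiable one_ne_zero
      exact (h2 x).hasFDerivAt
    exact ((ContinuousLinearMap.apply ℝ ℝ (e q)).hasFDerivAt).comp x h1
  -- symmetry of second derivatives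
  have hsymm : ∀ (p : Fin M) (v w : Fin (M+1) → ℝ), B p v w = B p w v := by
    intro p v w
    exact ((hH p).contDiffAt.isSymmSndFDerivAt (by norm_num)).eq v w
  -- derivative of the permutation products
  set P' : Perm (Fin (M+1)) → (Fin (M+1) → ℝ) →L[ℝ] ℝ :=
    fun σ => ∑ p : Fin M, (∏ r ∈ Finset.univ.erase p, fderiv ℝ (H r) x (e (σ r.succ))) •
      D' p (σ p.succ) with hP'
  have hP : ∀ σ : Perm (Fin (M+1)),
      HasFDerivAt (fun y => ∏ p : Fin M, fderiv ℝ (H p) y (e (σ p.succ))) (P' σ) x :=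
    fun σ => HasFDerivAt.finset_prod (fun p _ => hD p (σ p.succ))
  -- expansion of the Nambu vector field
  have key : ∀ (i : Fin (M+1)) (y : Fin (M+1) → ℝ), nambuVF (M+1) H i y =
      ∑ σ : Perm (Fin (M+1)),
        (((Perm.sign σ : ℤ) : ℝ) * e i (σ 0)) *
          ∏ p : Fin M, fderiv ℝ (H p) y (e (σ p.succ)) := by
    intro i y
    rw [nambuVF, ← Matrix.det_transpose, Matrix.det_apply']
    refine Finset.sum_congr rfl fun σ _ => ?_
    rw [Fin.prod_univ_succ]
    simp [grad, mul_assoc, he]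
  -- compute each fderiv
  have hX : ∀ i : Fin (M+1), fderiv ℝ (fun y => nambuVF (M+1) H i y) x =
      ∑ σ : Perm (Fin (M+1)), (((Perm.sign σ : ℤ) : ℝ) * e i (σ 0)) • P' σ := by
    intro i
    have h3 : HasFDerivAt (fun y => ∑ σ : Perm (Fin (M+1)),
        (((Perm.sign σ : ℤ) : ℝ) * e i (σ 0)) *
          ∏ p : Fin M, fderiv ℝ (H p) y (e (σ p.succ)))
        (∑ σ : Perm (Fin (M+1)), (((Perm.sign σ : ℤ) : ℝ) * e i (σ 0)) • P' σ) x :=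
      HasFDerivAt.fun_sum (fun σ _ => (hP σ).const_mul _)
    have h4 : (fun y => nambuVF (M+1) H i y) = (fun y => ∑ σ : Perm (Fin (M+1)),
        (((Perm.sign σ : ℤ) : ℝ) * e i (σ 0)) *
          ∏ p : Fin M, fderiv ℝ (H p) y (e (σ p.succ))) := funext fun y => key i y
    rw [h4]
    exact h3.fderiv
  simp only [hX]
  -- evaluate and reorganize
  have step1 : ∑ i : Fin (M+1),
      (∑ σ : Perm (Fin (M+1)), (((Perm.sign σ : ℤ) : ℝ) * e i (σ 0)) • P' σ) (Pi.single i 1)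
      = ∑ σ : Perm (Fin (M+1)), ((Perm.sign σ : ℤ) : ℝ) * P' σ (e (σ 0)) := by
    simp only [ContinuousLinearMap.sum_apply, ContinuousLinearMap.smul_apply, smul_eq_mul]
    rw [Finset.sum_comm]
    refine Finset.sum_congr rfl fun σ _ => ?_
    have : ∀ i : Fin (M+1), ((Perm.sign σ : ℤ) : ℝ) * e i (σ 0) * (P' σ) (Pi.single i 1)
        = if σ 0 = i then ((Perm.sign σ : ℤ) : ℝ) * (P' σ) (e i) else 0 := by
      intro i
      by_cases h : σ 0 = i <;> simp [he, Pi.single_apply, h, mul_assoc]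
    rw [Finset.sum_congr rfl fun i _ => this i, Finset.sum_ite_eq]
    simp
  rw [step1]
  -- the big double sum
  set G : Perm (Fin (M+1)) → Fin M → ℝ := fun σ p =>
    ((Perm.sign σ : ℤ) : ℝ) *
      ((∏ r ∈ Finset.univ.erase p, fderiv ℝ (H r) x (e (σ r.succ))) *
        B p (e (σ 0)) (e (σ p.succ))) with hG
  have step2 : ∀ σ : Perm (Fin (M+1)),
      ((Perm.sign σ : ℤ) : ℝ) * P' σ (e (σ 0)) = ∑ p : Fin M, G σ p := by
    intro σ
    simp only [hP', hD', hG, ContinuousLinearMap.sum_apply, ContinuousLinearMap.smul_apply,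
      ContinuousLinearMap.coe_comp', Function.comp_apply, ContinuousLinearMap.apply_apply,
      smul_eq_mul, Finset.mul_sum]
  rw [Finset.sum_congr rfl fun σ _ => step2 σ, Finset.sum_comm]
  refine Finset.sum_eq_zero fun p _ => ?_
  -- cancellation via the transposition (0, p.succ)
  have hne : (0 : Fin (M+1)) ≠ p.succ := (Fin.succ_ne_zero p).symm
  set τ := Equiv.swap (0 : Fin (M+1)) p.succ with hτ
  have hre : ∑ σ : Perm (Fin (M+1)), G (σ * τ) p = ∑ σ : Perm (Fin (M+1)), G σ p :=
    Fintype.sum_equiv (Equiv.mulRight τ) _ _ (fun σ => rfl)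
  have hneg : ∀ σ : Perm (Fin (M+1)), G (σ * τ) p = - G σ p := by
    intro σ
    have h0 : (σ * τ) 0 = σ p.succ := by
      simp [hτ, Perm.mul_apply, Equiv.swap_apply_left]
    have hps : (σ * τ) p.succ = σ 0 := by
      simp [hτ, Perm.mul_apply, Equiv.swap_apply_right]
    have hrr : ∀ r ∈ Finset.univ.erase p,
        fderiv ℝ (H r) x (e ((σ * τ) r.succ)) = fderiv ℝ (H r) x (e (σ r.succ)) := by
      intro r hrm
      have h1 : r ≠ p := (Finset.mem_erase.mp hrm).1
      rw [Perm.mul_apply, hτ, Equiv.swap_apply_of_ne_of_ne (Fin.succ_ne_zero r)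
        (fun h => h1 (Fin.succ_injective _ h))]
    have hs : ((Perm.sign (σ * τ) : ℤ) : ℝ) = - ((Perm.sign σ : ℤ) : ℝ) := by
      rw [hτ, Perm.sign_mul, Perm.sign_swap hne]
      push_cast
      ring
    simp only [hG]
    rw [hs, h0, hps, Finset.prod_congr rfl hrr, hsymm p (e (σ p.succ)) (e (σ 0))]
    ring
  have hzero : ∑ σ : Perm (Fin (M+1)), G σ p = - ∑ σ : Perm (Fin (M+1)), G σ p := by
    conv_lhs => rw [← hre]
    rw [Finset.sum_congr rfl fun σ _ => hneg σ, Finset.sum_neg_distrib]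
  linarith
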